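/- Let d ≥ 1, R > 0, θ ∈ (0,1), and M > 0. Let f be a pseudometric on [−R,R]^d. Suppose that for every integer k ≥ 0, when [−R,R]^d is partitioned into 2^{kd} axis-parallel cubes of side length 2^{−k+1}R, every cube I of this partition satisfies diam(I; f) ≤ (M/2)·(k+1)·(2^{−k}R)^θ·log 2. Then for all x, x' ∈ [−R,R]^d with x ≠ x', one has f(x,x') ≤ M · ‖x−x'‖_∞^θ · log(4R/‖x−x'‖_∞). -/

import Mathlib

/-- Chaining bound: if on every dyadic-scale cube of the partition of `[-R,R]^d` into
`2^{kd}` cubes of side `2^{-k+1}R` the pseudometric `f` has diameter at most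
`(M/2)(k+1)(2^{-k}R)^θ log 2`, then `f(x,x') ≤ M ‖x-x'‖_∞^θ log(4R/‖x-x'‖_∞)`. -/
theorem stmt5 (d : ℕ) (hd : 1 ≤ d) (R θ M : ℝ) (hR : 0 < R)
    (hθ : θ ∈ Set.Ioo (0:ℝ) 1) (hM : 0 < M)
    (f : (Fin d → ℝ) → (Fin d → ℝ) → ℝ)
    (hnonneg : ∀ x y, 0 ≤ f x y) (hself : ∀ x, f x x = 0)
    (hsymm : ∀ x y, f x y = f y x)
    (htri : ∀ x y z, f x z ≤ f x y + f y z)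
    (hcube : ∀ k : ℕ, ∀ j : Fin d → Fin (2 ^ k), ∀ u v : Fin d → ℝ,
      (∀ i, -R + ((j i : ℕ) : ℝ) * (2 * R / 2 ^ k) ≤ u i ∧
            u i ≤ -R + (((j i : ℕ) : ℝ) + 1) * (2 * R / 2 ^ k)) →
      (∀ i, -R + ((j i : ℕ) : ℝ) * (2 * R / 2 ^ k) ≤ v i ∧
            v i ≤ -R + (((j i : ℕ) : ℝ) + 1) * (2 * R / 2 ^ k)) →
      f u v ≤ (M / 2) * ((k : ℝ) + 1) * (R / 2 ^ k) ^ θ * Real.log 2) :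
    ∀ x x' : Fin d → ℝ, (∀ i, |x i| ≤ R) → (∀ i, |x' i| ≤ R) → x ≠ x' →
      f x x' ≤ M * ‖x - x'‖ ^ θ * Real.log (4 * R / ‖x - x'‖) := by
  intro x x' hx hx' hne
  set r := ‖x - x'‖ with hrdef
  have hrpos : 0 < r := by
    rw [hrdef, norm_pos_iff]; exact sub_ne_zero.mpr hne
  have hcoord : ∀ i, |x i - x' i| ≤ r := by
    intro i
    have := norm_le_pi_norm (x - x') i
    simpa [Real.norm_eq_abs] using this
  have hr2R : r ≤ 2 * R := by
    rw [hrdef]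
    refine (pi_norm_le_iff_of_nonneg (by positivity)).mpr ?_
    intro i
    calc ‖(x - x') i‖ = |x i - x' i| := by simp [Real.norm_eq_abs]
      _ ≤ |x i| + |x' i| := abs_sub _ _
      _ ≤ R + R := add_le_add (hx i) (hx' i)
      _ = 2 * R := by ring
  -- choose the scale k
  have hex : ∃ k : ℕ, 2 * R / 2 ^ (k + 1) < r := by
    obtain ⟨n, hn⟩ := pow_unbounded_of_one_lt (2 * R / r) (by norm_num : (1:ℝ) < 2)
    refine ⟨n, ?_⟩
    rw [div_lt_iff₀ (by positivity)]
    calc 2 * R = (2 * R / r) * r := by field_simp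
      _ < 2 ^ n * r := by gcongr
      _ ≤ 2 ^ (n + 1) * r := by
          apply mul_le_mul_of_nonneg_right ?_ hrpos.le
          apply pow_le_pow_right₀ (by norm_num) (by omega)
      _ = r * 2 ^ (n + 1) := by ring
  set k := Nat.find hex with hkdef
  have hk1 : 2 * R / 2 ^ (k + 1) < r := Nat.find_spec hex
  have hk2 : r ≤ 2 * R / 2 ^ k := by
    rcases Nat.eq_zero_or_pos k with h0 | hpos
    · rw [h0]; simpa using hr2R
    · have hmin := Nat.find_min hex (m := k - 1) (by omega)
      push_neg at hmin
      have heq : k - 1 + 1 = k := by omega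
      rwa [heq] at hmin
  set s : ℝ := 2 * R / 2 ^ k with hsdef
  have hs : 0 < s := by positivity
  have hs2 : s / 2 < r := by
    have : 2 * R / 2 ^ (k + 1) = s / 2 := by
      rw [hsdef, pow_succ]; ring
    linarith [this ▸ hk1]
  -- per-coordinate index
  set nn : ℝ → ℕ := fun a => min ⌊(a + R) / s⌋₊ (2 ^ k - 1) with hnndef
  have hnnlt : ∀ a, nn a < 2 ^ k := by
    intro a
    have h2 : (0:ℕ) < 2 ^ k := Nat.pow_pos (by norm_num)
    exact lt_of_le_of_lt (min_le_right _ _) (Nat.sub_lt h2 one_pos)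
  have hinCube : ∀ a, |a| ≤ R → -R + (nn a : ℝ) * s ≤ a ∧ a ≤ -R + ((nn a : ℝ) + 1) * s := by
    intro a ha
    have haR : 0 ≤ (a + R) / s := by
      have h := abs_le.mp ha
      have : 0 ≤ a + R := by linarith
      exact div_nonneg this hs.le
    constructor
    · have h1 : (nn a : ℝ) ≤ ⌊(a + R) / s⌋₊ := by
        exact_mod_cast Nat.cast_le.mpr (min_le_left _ _)
      have h2 : (⌊(a + R) / s⌋₊ : ℝ) ≤ (a + R) / s := Nat.floor_le haR
      have : (nn a : ℝ) * s ≤ a + R := by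
        calc (nn a : ℝ) * s ≤ ((a + R) / s) * s := by
              apply mul_le_mul_of_nonneg_right (h1.trans h2) hs.le
          _ = a + R := by field_simp
      linarith
    · rcases le_or_gt ⌊(a + R) / s⌋₊ (2 ^ k - 1) with h | h
      · have heq : nn a = ⌊(a + R) / s⌋₊ := min_eq_left h
        have := Nat.lt_floor_add_one ((a + R) / s)
        have h2 : (a + R) / s < (nn a : ℝ) + 1 := by rw [heq]; exact_mod_cast this
        have : a + R < ((nn a : ℝ) + 1) * s := by
          calc a + R = ((a + R) / s) * s := by field_simp
            _ < ((nn a : ℝ) + 1) * s := by apply mul_lt_mul_of_pos_right h2 hs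
        linarith
      · have heq : nn a = 2 ^ k - 1 := min_eq_right (le_of_lt h)
        have h1 : ((nn a : ℕ) : ℝ) + 1 = (2:ℝ) ^ k := by
          rw [heq]
          have : (0:ℕ) < 2 ^ k := Nat.pow_pos (by norm_num)
          push_cast [Nat.cast_sub (by omega : 1 ≤ 2 ^ k)]
          ring
        have : ((nn a : ℝ) + 1) * s = 2 * R := by
          rw [h1, hsdef]; field_simp
        rw [this]
        have := abs_le.mp ha
        linarith
  -- Lipschitz property of nn
  have hlip : ∀ a b : ℝ, |a| ≤ R → |b| ≤ R → a - b ≤ s → nn a ≤ nn b + 1 := by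
    intro a b ha hb hab
    have hbR : 0 ≤ (b + R) / s := by
      have h := abs_le.mp hb
      have : 0 ≤ b + R := by linarith
      exact div_nonneg this hs.le
    have h1 : (a + R) / s ≤ (b + R) / s + 1 := by
      have e : (b + R) / s + 1 = (b + R + s) / s := by field_simp
      rw [e, div_le_div_iff_of_pos_right hs]
      linarith
    have h2 : ⌊(a + R) / s⌋₊ ≤ ⌊(b + R) / s⌋₊ + 1 := by
      calc ⌊(a + R) / s⌋₊ ≤ ⌊(b + R) / s + 1⌋₊ := Nat.floor_le_floor h1
        _ = ⌊(b + R) / s⌋₊ + 1 := by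
            rw [Nat.floor_add_one hbR]
    simp only [hnndef]
    omega
  -- build the midpoint y
  set y : Fin d → ℝ := fun i => -R + (max (nn (x i)) (nn (x' i)) : ℝ) * s with hydef
  have hybetween : ∀ (a b : ℝ), a - b ≤ s → b - a ≤ s → |a| ≤ R → |b| ≤ R →
      -R + (nn a : ℝ) * s ≤ -R + (max (nn a) (nn b) : ℝ) * s ∧
      -R + (max (nn a) (nn b) : ℝ) * s ≤ -R + ((nn a : ℝ) + 1) * s := by
    intro a b h1 h2 ha hb
    have hle : max (nn a) (nn b) ≤ nn a + 1 := by
      have := hlip b a hb ha h2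
      omega
    have hge : nn a ≤ max (nn a) (nn b) := le_max_left _ _
    constructor
    · have : (nn a : ℝ) ≤ (max (nn a) (nn b) : ℝ) := by exact_mod_cast hge
      nlinarith
    · have : (max (nn a) (nn b) : ℝ) ≤ (nn a : ℝ) + 1 := by exact_mod_cast hle
      nlinarith
  have hcoords : ∀ i, x i - x' i ≤ s ∧ x' i - x i ≤ s := by
    intro i
    have := hcoord i
    have h := abs_le.mp this
    constructor <;> linarith [hk2, h.1, h.2]
  -- apply hcube for x and y
  set j : Fin d → Fin (2 ^ k) := fun i => ⟨nn (x i), hnnlt _⟩ with hjdef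
  set j' : Fin d → Fin (2 ^ k) := fun i => ⟨nn (x' i), hnnlt _⟩ with hj'def
  have hfxy : f x y ≤ (M / 2) * ((k : ℝ) + 1) * (R / 2 ^ k) ^ θ * Real.log 2 := by
    apply hcube k j x y
    · intro i; exact hinCube (x i) (hx i)
    · intro i
      have := hybetween (x i) (x' i) (hcoords i).1 (hcoords i).2 (hx i) (hx' i)
      simpa [hydef, hjdef] using this
  have hfyx' : f y x' ≤ (M / 2) * ((k : ℝ) + 1) * (R / 2 ^ k) ^ θ * Real.log 2 := by
    rw [hsymm]
    apply hcube k j' x' y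
    · intro i; exact hinCube (x' i) (hx' i)
    · intro i
      have := hybetween (x' i) (x i) (hcoords i).2 (hcoords i).1 (hx' i) (hx i)
      simpa [hydef, hj'def, max_comm] using this
  have hchain : f x x' ≤ M * ((k : ℝ) + 1) * (R / 2 ^ k) ^ θ * Real.log 2 := by
    calc f x x' ≤ f x y + f y x' := htri x y x'
      _ ≤ (M / 2) * ((k : ℝ) + 1) * (R / 2 ^ k) ^ θ * Real.log 2
          + (M / 2) * ((k : ℝ) + 1) * (R / 2 ^ k) ^ θ * Real.log 2 := add_le_add hfxy hfyx'
      _ = M * ((k : ℝ) + 1) * (R / 2 ^ k) ^ θ * Real.log 2 := by ring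
  -- final arithmetic
  have hA : (R / 2 ^ k : ℝ) ^ θ ≤ r ^ θ := by
    apply Real.rpow_le_rpow (by positivity) ?_ hθ.1.le
    have : (R / 2 ^ k : ℝ) = s / 2 := by rw [hsdef]; ring
    linarith [this ▸ hs2]
  have hB : ((k : ℝ) + 1) * Real.log 2 ≤ Real.log (4 * R / r) := by
    have h1 : ((k : ℝ) + 1) * Real.log 2 = Real.log (2 ^ (k + 1)) := by
      rw [Real.log_pow]; push_cast; ring
    rw [h1]
    apply Real.log_le_log (by positivity)
    rw [le_div_iff₀ hrpos]
    calc (2:ℝ) ^ (k + 1) * r ≤ 2 ^ (k + 1) * (2 * R / 2 ^ k) := by gcongr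
      _ = 4 * R := by rw [pow_succ]; field_simp; ring
  calc f x x' ≤ M * ((k : ℝ) + 1) * (R / 2 ^ k) ^ θ * Real.log 2 := hchain
    _ = M * ((R / 2 ^ k) ^ θ * (((k : ℝ) + 1) * Real.log 2)) := by ring
    _ ≤ M * (r ^ θ * Real.log (4 * R / r)) := by
        apply mul_le_mul_of_nonneg_left ?_ hM.le
        apply mul_le_mul hA hB ?_ (by positivity)
        · positivity
    _ = M * r ^ θ * Real.log (4 * R / r) := by ring
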